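/- arXiv:0806.1307 — 7 statements merged into one kernel-verified Lean document; each statement's English description precedes it below -/
import Mathlib

section
/- Let T : X →→ X* be a regular maximal monotone multifunction and S : X →→ X* a bounded maximal monotone multifunction (i.e., there is M such that ‖u*‖ ≤ M for all (y, u*) ∈ G(S)). Then every pair (x, x*) ∈ X × X* that is monotonically related to G(T + S) satisfies L(x, x*, T) ≤ M, and hence x ∈ D_T. -/
open scoped ENNReal
open NormedSpace Pointwise

variable {X : Type*} [NormedAddCommGroup X] [NormedSpace ℝ X] [CompleteSpace X]

/-- `T` is a monotone multifunction. -/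
def IsMonotoneOp (T : X → Set (StrongDual ℝ X)) : Prop :=
  ∀ ⦃x xs y ys⦄, xs ∈ T x → ys ∈ T y → 0 ≤ (xs - ys) (x - y)

/-- `T` is a maximal monotone multifunction. -/
def IsMaxMonotoneOp (T : X → Set (StrongDual ℝ X)) : Prop :=
  IsMonotoneOp T ∧ ∀ x xs, (∀ y ys, ys ∈ T y → 0 ≤ (xs - ys) (x - y)) → xs ∈ T x

/-- L(x, x*, T). -/
noncomputable def Lnum (T : X → Set (StrongDual ℝ X)) (x : X) (xs : StrongDual ℝ X) : ℝ≥0∞ :=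
  ⨆ (y : X) (ys : StrongDual ℝ X) (_ : ys ∈ T y) (_ : y ≠ x),
    ENNReal.ofReal ((xs - ys) (y - x) / ‖x - y‖)

/-- d(x*, T(x)). -/
noncomputable def dnum (T : X → Set (StrongDual ℝ X)) (x : X) (xs : StrongDual ℝ X) : ℝ≥0∞ :=
  ⨅ (ys : StrongDual ℝ X) (_ : ys ∈ T x), ENNReal.ofReal ‖ys - xs‖

def IsRegularOp (T : X → Set (StrongDual ℝ X)) : Prop :=
  ∀ x xs, Lnum T x xs = dnum T x xs

def subdiff (f : X → ℝ) (z : X) : Set (StrongDual ℝ X) :=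
  {zs | ∀ w, f z + zs (w - z) ≤ f w}

/-- T^ε enlargement. -/
def Te (T : X → Set (StrongDual ℝ X)) (ε : ℝ) (x : X) : Set (StrongDual ℝ X) :=
  {xs | ∀ y ys, ys ∈ T y → -(ε * ‖x - y‖) ≤ (xs - ys) (x - y)}

/-- T_ε enlargement. -/
def Tlow (T : X → Set (StrongDual ℝ X)) (ε : ℝ) (x : X) : Set (StrongDual ℝ X) :=
  {xs | ∀ y ys, ys ∈ T y → -ε ≤ (xs - ys) (x - y)}


section AuxDF
open Metric

lemma pi_expand {ι : Type*} [Fintype ι] [DecidableEq ι] (f : (ι → ℝ) →L[ℝ] ℝ) (c : ι → ℝ) :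
    f c = ∑ i, c i * f (Pi.single i 1) := by
  have hc : c = ∑ i, c i • (Pi.single i 1 : ι → ℝ) := by
    funext j
    simp [Finset.sum_apply, Pi.single_apply, mul_ite]
  calc f c = f (∑ i, c i • (Pi.single i 1 : ι → ℝ)) := by rw [← hc]
    _ = ∑ i, c i * f (Pi.single i 1) := by rw [map_sum]; simp

lemma finite_df {ι : Type*} [Fintype ι] {M : ℝ} (hM0 : 0 ≤ M)
    (z : ι → X) (zs : ι → StrongDual ℝ X)
    (hmono : ∀ i j, 0 ≤ (zs i - zs j) (z i - z j))
    (hb : ∀ i, ‖zs i‖ ≤ M) (y₀ : X) :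
    ∃ w : StrongDual ℝ X, ‖w‖ ≤ M ∧ ∀ i, 0 ≤ (w - zs i) (y₀ - z i) := by
  classical
  by_contra hcon
  push_neg at hcon
  -- the continuous affine evaluation map into ℝ^ι
  set Ψ : WeakDual ℝ X → ι → ℝ :=
    fun w i => w (z i - y₀) + zs i (y₀ - z i) with hΨ
  have hΨcont : Continuous Ψ :=
    continuous_pi fun i => (WeakDual.eval_continuous (z i - y₀)).add continuous_const
  have hneg : ∀ (i) (w : StrongDual ℝ X), (w - zs i) (y₀ - z i)
      = -(w (z i - y₀) + zs i (y₀ - z i)) := by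
    intro i w
    simp only [ContinuousLinearMap.sub_apply, map_sub]
    ring
  set K : Set (WeakDual ℝ X) := WeakDual.toStrongDual ⁻¹' closedBall 0 M with hK
  have hKmem : ∀ w : WeakDual ℝ X, w ∈ K ↔ ‖WeakDual.toStrongDual w‖ ≤ M := by
    intro w; simp [hK, mem_closedBall_zero_iff]
  have hKcomp : IsCompact K := WeakDual.isCompact_closedBall (𝕜 := ℝ) (E := X) 0 M
  set C : Set (ι → ℝ) := Ψ '' K with hC
  have hCcomp : IsCompact C := hKcomp.image hΨcont
  have hCconv : Convex ℝ C := by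
    rintro c₁ ⟨w₁, hw₁, rfl⟩ c₂ ⟨w₂, hw₂, rfl⟩ a b ha hb' hab
    refine ⟨a • w₁ + b • w₂, ?_, ?_⟩
    · rw [hKmem] at *
      calc ‖WeakDual.toStrongDual (a • w₁ + b • w₂)‖
          ≤ a * ‖WeakDual.toStrongDual w₁‖ + b * ‖WeakDual.toStrongDual w₂‖ := by
            rw [map_add, map_smul, map_smul]
            refine (norm_add_le _ _).trans ?_
            rw [norm_smul, norm_smul, Real.norm_eq_abs, Real.norm_eq_abs,
              abs_of_nonneg ha, abs_of_nonneg hb']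
        _ ≤ a * M + b * M := by
            gcongr <;> assumption
        _ = M := by rw [← add_mul, hab, one_mul]
    · funext i
      have happ : ((a • w₁ + b • w₂ : WeakDual ℝ X)) (z i - y₀)
          = a * w₁ (z i - y₀) + b * w₂ (z i - y₀) := rfl
      simp only [hΨ, Pi.add_apply, Pi.smul_apply, smul_eq_mul, happ]
      linear_combination (-((zs i) (y₀ - z i))) * hab
  set O : Set (ι → ℝ) := {c | ∀ i, c i ≤ 0} with hO
  have hOclosed : IsClosed O := by
    have : O = ⋂ i, {c : ι → ℝ | c i ≤ 0} := by
      ext c; simp [hO, Set.mem_iInter]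
    rw [this]
    exact isClosed_iInter fun i => isClosed_le (continuous_apply i) continuous_const
  have hOconv : Convex ℝ O := by
    rintro c₁ h₁ c₂ h₂ a b ha hb' hab i
    have := h₁ i; have := h₂ i
    simp only [Pi.add_apply, Pi.smul_apply, smul_eq_mul]
    nlinarith
  have hdisj : Disjoint C O := by
    rw [Set.disjoint_left]
    rintro c ⟨w, hwK, rfl⟩ hcO
    obtain ⟨i, hi⟩ := hcon (WeakDual.toStrongDual w) ((hKmem w).1 hwK)
    rw [hneg] at hi
    have h2 := hcO i
    simp only [hΨ, Set.mem_setOf_eq] at h2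
    have : (WeakDual.toStrongDual w) (z i - y₀) = w (z i - y₀) := rfl
    rw [this] at hi
    linarith
  obtain ⟨f, u, v, hfu, huv, hvO⟩ :=
    geometric_hahn_banach_compact_closed hCconv hCcomp hOconv hOclosed hdisj
  have hv0 : v < 0 := by
    have h0 : (0 : ι → ℝ) ∈ O := fun i => le_refl 0
    have := hvO 0 h0
    simpa using this
  set lam : ι → ℝ := fun i => -(f (Pi.single i 1)) with hlamdef
  have hlam : ∀ i, 0 ≤ lam i := by
    intro i
    by_contra hneg'
    push_neg at hneg'
    have hfe : 0 < f (Pi.single i 1) := by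
      simp only [hlamdef, neg_neg, Left.neg_neg_iff] at hneg' ⊢
      linarith [hneg']
    set c : ℝ := (1 + |v|) / f (Pi.single i 1) with hcdef
    have hcpos : 0 ≤ c := div_nonneg (by positivity) hfe.le
    have hmemO : ((-c) • (Pi.single i 1 : ι → ℝ)) ∈ O := by
      intro j
      simp only [Pi.smul_apply, smul_eq_mul]
      have : (0:ℝ) ≤ (Pi.single i 1 : ι → ℝ) j := by
        rcases eq_or_ne j i with rfl | hji
        · simp
        · simp [Pi.single_apply, hji]
      nlinarith
    have := hvO _ hmemO
    rw [map_smul, smul_eq_mul] at this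
    have hcfe : c * f (Pi.single i 1) = 1 + |v| := div_mul_cancel₀ _ hfe.ne'
    have habs := neg_abs_le v
    nlinarith
  have hfC : ∀ w ∈ K, 0 < ∑ i, lam i * Ψ w i := by
    intro w hw
    have h1 : f (Ψ w) < 0 := lt_trans (hfu _ ⟨w, hw, rfl⟩) (lt_trans huv hv0)
    have h2 := pi_expand f (Ψ w)
    have h3 : ∑ i, Ψ w i * f (Pi.single i 1) = -∑ i, lam i * Ψ w i := by
      rw [← Finset.sum_neg_distrib]
      refine Finset.sum_congr rfl fun i _ => ?_
      simp only [hlamdef]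
      ring
    rw [h3] at h2
    linarith
  -- construct a contradicting w₀
  set s : ℝ := ∑ i, lam i with hsdef
  set v₀ : X := ∑ i, lam i • (z i - y₀) with hv₀def
  set r : ℝ := ∑ i, lam i * zs i (y₀ - z i) with hrdef
  have hr : r ≤ M * ‖v₀‖ := by
    have hs0 : 0 ≤ s := Finset.sum_nonneg fun i _ => hlam i
    rcases eq_or_lt_of_le hs0 with hseq | hspos
    · -- s = 0 : all lam are 0
      have hall : ∀ i ∈ Finset.univ, lam i = 0 :=
        (Finset.sum_eq_zero_iff_of_nonneg (fun i _ => hlam i)).1 hseq.symm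
      have : r = 0 := by
        rw [hrdef]
        exact Finset.sum_eq_zero fun i hi => by rw [hall i hi, zero_mul]
      rw [this]
      positivity
    · -- main computation
      have hdecomp : ∀ i, s * zs i (y₀ - z i)
          = zs i (-v₀) + ∑ j, lam j * zs i (z j - z i) := by
        intro i
        have h1 : s • (y₀ - z i) = -v₀ + ∑ j, lam j • (z j - z i) := by
          rw [hv₀def, hsdef, Finset.sum_smul, ← Finset.sum_neg_distrib,
            ← Finset.sum_add_distrib]
          refine Finset.sum_congr rfl fun j _ => ?_
          rw [← smul_neg, ← smul_add, neg_sub]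
          congr 1
          abel
        calc s * zs i (y₀ - z i) = zs i (s • (y₀ - z i)) := by
              rw [map_smul, smul_eq_mul]
          _ = zs i (-v₀ + ∑ j, lam j • (z j - z i)) := by rw [h1]
          _ = zs i (-v₀) + ∑ j, lam j * zs i (z j - z i) := by
              rw [map_add, map_sum]
              simp [map_smul]
      have hkey : s * r = (∑ i, lam i * zs i (-v₀))
          + ∑ i, ∑ j, lam i * (lam j * zs i (z j - z i)) := by
        rw [hrdef, Finset.mul_sum, ← Finset.sum_add_distrib]
        refine Finset.sum_congr rfl fun i _ => ?_
        calc s * (lam i * zs i (y₀ - z i)) = lam i * (s * zs i (y₀ - z i)) := by ring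
          _ = lam i * (zs i (-v₀) + ∑ j, lam j * zs i (z j - z i)) := by rw [hdecomp i]
          _ = lam i * zs i (-v₀) + ∑ j, lam i * (lam j * zs i (z j - z i)) := by
              rw [mul_add, Finset.mul_sum]
      have hD : (∑ i, ∑ j, lam i * (lam j * zs i (z j - z i))) ≤ 0 := by
        have hsym : (∑ i, ∑ j, lam i * (lam j * zs i (z j - z i))) * 2
            = ∑ i, ∑ j, (lam i * (lam j * zs i (z j - z i))
              + lam j * (lam i * zs j (z i - z j))) := by
          rw [mul_two]
          nth_rewrite 2 [Finset.sum_comm]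
          rw [← Finset.sum_add_distrib]
          refine Finset.sum_congr rfl fun i _ => ?_
          rw [← Finset.sum_add_distrib]
        have hterm : ∀ i j, lam i * (lam j * zs i (z j - z i))
            + lam j * (lam i * zs j (z i - z j)) ≤ 0 := by
          intro i j
          have hAB : zs i (z j - z i) + zs j (z i - z j)
              = -((zs i - zs j) (z i - z j)) := by
            simp only [ContinuousLinearMap.sub_apply, map_sub]
            ring
          have h1 := hmono i j
          have h2 := mul_nonneg (hlam i) (hlam j)
          nlinarith
        have : (∑ i, ∑ j, lam i * (lam j * zs i (z j - z i))) * 2 ≤ 0 := by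
          rw [hsym]
          exact Finset.sum_nonpos fun i _ => Finset.sum_nonpos fun j _ => hterm i j
        linarith
      have hfirst : (∑ i, lam i * zs i (-v₀)) ≤ s * (M * ‖v₀‖) := by
        rw [hsdef, Finset.sum_mul]
        refine Finset.sum_le_sum fun i _ => ?_
        have h1 : zs i (-v₀) ≤ M * ‖v₀‖ := by
          calc zs i (-v₀) ≤ ‖zs i (-v₀)‖ := le_abs_self _
            _ ≤ ‖zs i‖ * ‖-v₀‖ := (zs i).le_opNorm _
            _ = ‖zs i‖ * ‖v₀‖ := by rw [norm_neg]
            _ ≤ M * ‖v₀‖ := by gcongr; exact hb i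
        exact mul_le_mul_of_nonneg_left h1 (hlam i)
      have : s * r ≤ s * (M * ‖v₀‖) := by
        rw [hkey]; linarith
      exact le_of_mul_le_mul_left this hspos
  -- now obtain w₀
  obtain ⟨w₀, hw₀M, hw₀v⟩ : ∃ w₀ : StrongDual ℝ X, ‖w₀‖ ≤ M ∧ w₀ v₀ + r ≤ 0 := by
    rcases eq_or_ne v₀ 0 with hv0' | hv0'
    · refine ⟨0, by simpa using hM0, ?_⟩
      simp only [ContinuousLinearMap.zero_apply, zero_add]
      rw [hv0'] at hr
      simpa using hr
    · obtain ⟨g, hg1, hgv⟩ := exists_dual_vector ℝ v₀ (norm_ne_zero_iff.mpr hv0')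
      have hgv' : g v₀ = ‖v₀‖ := by exact_mod_cast hgv
      refine ⟨(-M) • g, ?_, ?_⟩
      · rw [norm_smul, Real.norm_eq_abs, abs_neg, abs_of_nonneg hM0, hg1, mul_one]
      · rw [ContinuousLinearMap.smul_apply, hgv']
        simp only [smul_eq_mul, neg_mul]
        linarith
  -- w₀ contradicts hfC
  have hmemK : (WeakDual.toStrongDual.symm w₀ : WeakDual ℝ X) ∈ K := by
    rw [hKmem, LinearEquiv.apply_symm_apply]
    exact hw₀M
  have hpos := hfC _ hmemK
  have hsum : ∑ i, lam i * Ψ (WeakDual.toStrongDual.symm w₀) i = w₀ v₀ + r := by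
    have happ : ∀ y : X, (WeakDual.toStrongDual.symm w₀ : WeakDual ℝ X) y = w₀ y := by
      intro y
      have : WeakDual.toStrongDual ((WeakDual.toStrongDual.symm w₀ : WeakDual ℝ X)) = w₀ :=
        LinearEquiv.apply_symm_apply _ _
      rw [← this]; rfl
    have h1 : ∀ i, lam i * Ψ (WeakDual.toStrongDual.symm w₀) i
        = lam i * w₀ (z i - y₀) + lam i * zs i (y₀ - z i) := by
      intro i
      simp only [hΨ, happ]
      ring
    rw [Finset.sum_congr rfl fun i _ => h1 i, Finset.sum_add_distrib, hv₀def, map_sum]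
    simp only [map_smul, smul_eq_mul, hrdef]
  rw [hsum] at hpos
  linarith

lemma debrunner_flor {S : X → Set (StrongDual ℝ X)} (hS : IsMonotoneOp S) {M : ℝ} (hM0 : 0 ≤ M)
    (hb : ∀ y us, us ∈ S y → ‖us‖ ≤ M) (y₀ : X) :
    ∃ w : StrongDual ℝ X, ‖w‖ ≤ M ∧ ∀ z zs, zs ∈ S z → 0 ≤ (w - zs) (y₀ - z) := by
  classical
  set K : Set (WeakDual ℝ X) := WeakDual.toStrongDual ⁻¹' closedBall 0 M with hK
  have hKcomp : IsCompact K := WeakDual.isCompact_closedBall (𝕜 := ℝ) (E := X) 0 M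
  set Z : {p : X × StrongDual ℝ X // p.2 ∈ S p.1} → Set (WeakDual ℝ X) :=
    fun p => {w | 0 ≤ (WeakDual.toStrongDual w - p.1.2) (y₀ - p.1.1)} with hZ
  have hZc : ∀ p, IsClosed (Z p) := by
    intro p
    have heq : Z p = (fun w : WeakDual ℝ X => w (y₀ - p.1.1) - p.1.2 (y₀ - p.1.1)) ⁻¹'
        Set.Ici 0 := by
      ext w
      simp only [hZ, Set.mem_setOf_eq, Set.mem_preimage, Set.mem_Ici,
        ContinuousLinearMap.sub_apply]
      rfl
    rw [heq]
    exact IsClosed.preimage ((WeakDual.eval_continuous _).sub continuous_const) isClosed_Ici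
  have hne : (K ∩ ⋂ p, Z p).Nonempty := by
    by_contra hempty
    rw [Set.not_nonempty_iff_eq_empty] at hempty
    obtain ⟨t, ht⟩ := hKcomp.elim_finite_subfamily_closed Z hZc hempty
    obtain ⟨w, hwM, hw⟩ := finite_df (ι := ↥t) hM0 (fun p => p.1.1.1) (fun p => p.1.1.2)
      (fun i j => hS i.1.2 j.1.2) (fun i => hb _ _ i.1.2) y₀
    have hmem : (WeakDual.toStrongDual.symm w : WeakDual ℝ X) ∈ K ∩ ⋂ p ∈ t, Z p := by
      constructor
      · simp only [hK, Set.mem_preimage, LinearEquiv.apply_symm_apply,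
          mem_closedBall_zero_iff]
        exact hwM
      · rw [Set.mem_iInter₂]
        intro p hp
        have := hw ⟨p, hp⟩
        simp only [hZ, Set.mem_setOf_eq, LinearEquiv.apply_symm_apply]
        exact this
    rw [ht] at hmem
    exact hmem
  obtain ⟨w, hwK, hwZ⟩ := hne
  refine ⟨WeakDual.toStrongDual w, ?_, ?_⟩
  · simpa only [hK, Set.mem_preimage, mem_closedBall_zero_iff] using hwK
  · intro z zs hzs
    have := Set.mem_iInter.1 hwZ ⟨(z, zs), hzs⟩
    simpa only [hZ, Set.mem_setOf_eq] using this

end AuxDF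

theorem stmt1 (T S : X → Set (StrongDual ℝ X)) (hT : IsMaxMonotoneOp T) (hreg : IsRegularOp T)
    (hS : IsMaxMonotoneOp S) (M : ℝ) (hM : ∀ y us, us ∈ S y → ‖us‖ ≤ M)
    (x : X) (xs : StrongDual ℝ X)
    (hrel : ∀ y ys us, ys ∈ T y → us ∈ S y → 0 ≤ ((ys + us) - xs) (y - x)) :
    Lnum T x xs ≤ ENNReal.ofReal M ∧ (T x).Nonempty := by
  obtain ⟨z₀, zs₀, hz₀⟩ : ∃ z zs, zs ∈ S z := by
    by_cases h : ∃ z zs, zs ∈ S z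
    · exact h
    · push_neg at h
      exact absurd (hS.2 0 0 fun y ys hy => absurd hy (h y ys)) (h 0 0)
  have hM0 : 0 ≤ M := le_trans (norm_nonneg zs₀) (hM _ _ hz₀)
  have key : ∀ y ys, ys ∈ T y → y ≠ x → (xs - ys) (y - x) / ‖x - y‖ ≤ M := by
    intro y ys hy hyx
    obtain ⟨w, hwM, hwr⟩ := debrunner_flor hS.1 hM0 hM y
    have hwS : w ∈ S y := hS.2 y w fun z zs hz => hwr z zs hz
    have h1 := hrel y ys w hy hwS
    have h2 : (xs - ys) (y - x) ≤ w (y - x) := by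
      simp only [ContinuousLinearMap.sub_apply, ContinuousLinearMap.add_apply] at h1 ⊢
      linarith
    have h3 : w (y - x) ≤ M * ‖x - y‖ := by
      calc w (y - x) ≤ ‖w (y - x)‖ := le_abs_self _
        _ ≤ ‖w‖ * ‖y - x‖ := w.le_opNorm _
        _ ≤ M * ‖y - x‖ := by gcongr
        _ = M * ‖x - y‖ := by rw [norm_sub_rev]
    have hpos : 0 < ‖x - y‖ := by
      rw [norm_sub_pos_iff]
      exact hyx.symm
    rw [div_le_iff₀ hpos]
    linarith
  have hL : Lnum T x xs ≤ ENNReal.ofReal M := by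
    rw [Lnum]
    refine iSup_le fun y => iSup_le fun ys => iSup_le fun hy => iSup_le fun hyx => ?_
    exact ENNReal.ofReal_le_ofReal (key y ys hy hyx)
  refine ⟨hL, ?_⟩
  by_contra hne
  rw [Set.not_nonempty_iff_eq_empty] at hne
  have hd : dnum T x xs = ⊤ := by simp [dnum, hne]
  have hL' := hL
  rw [hreg x xs, hd] at hL'
  exact ENNReal.ofReal_lt_top.not_ge hL'
end

section
/- Let T : X →→ X* be a maximal monotone multifunction, x ∈ X, λ > 0, and suppose L(x, x*, T) = λ < ∞. Then L(x, x*, T + ∂g_{λ,x}) = 0, i.e., (x, x*) is monotonically related to the graph of T + ∂g_{λ,x}. -/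
open scoped ENNReal
open NormedSpace Pointwise

variable {X : Type*} [NormedAddCommGroup X] [NormedSpace ℝ X] [CompleteSpace X]

theorem stmt3 (T : X → Set (StrongDual ℝ X)) (hT : IsMaxMonotoneOp T) (x : X) (xs : StrongDual ℝ X)
    (l : ℝ) (hl : 0 < l) (hL : Lnum T x xs = ENNReal.ofReal l) :
    Lnum (fun z => T z + subdiff (fun w => l * ‖w - x‖) z) x xs = 0
    ∧ ∀ w ws us, ws ∈ T w → us ∈ subdiff (fun w' => l * ‖w' - x‖) w →
        0 ≤ ((ws + us) - xs) (w - x) := by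
  have hkey : ∀ w ws, ws ∈ T w → (xs - ws) (w - x) ≤ l * ‖w - x‖ := by
    intro w ws hws
    by_cases hw : w = x
    · subst hw; simp [mul_nonneg hl.le (norm_nonneg _)]
    · have hle : ENNReal.ofReal ((xs - ws) (w - x) / ‖x - w‖) ≤ Lnum T x xs := by
        apply le_iSup_of_le w; apply le_iSup_of_le ws
        apply le_iSup_of_le hws; exact le_iSup_of_le hw le_rfl
      rw [hL, ENNReal.ofReal_le_ofReal_iff hl.le] at hle
      have hpos : (0:ℝ) < ‖x - w‖ := by
        rw [norm_pos_iff]; intro h; exact hw (sub_eq_zero.mp h).symm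
      have h2 := (div_le_iff₀ hpos).mp hle
      rw [norm_sub_rev x w] at h2
      nlinarith [h2]
  have hsub : ∀ w us, us ∈ subdiff (fun w' => l * ‖w' - x‖) w →
      l * ‖w - x‖ ≤ us (w - x) := by
    intro w us hus
    have h := hus x
    simp only [sub_self, norm_zero, mul_zero] at h
    have hx : us (x - w) = -(us (w - x)) := by
      rw [← neg_sub w x, map_neg]
    linarith [hx]
  have hmono : ∀ w ws us, ws ∈ T w → us ∈ subdiff (fun w' => l * ‖w' - x‖) w →
      0 ≤ ((ws + us) - xs) (w - x) := by
    intro w ws us hws hus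
    have h1 := hkey w ws hws
    have h2 := hsub w us hus
    simp only [ContinuousLinearMap.sub_apply, ContinuousLinearMap.add_apply] at *
    linarith
  refine ⟨?_, hmono⟩
  refine le_antisymm ?_ zero_le
  refine iSup_le fun y => iSup_le fun ys => iSup_le fun hys => iSup_le fun hy => ?_
  obtain ⟨ws, hws, us, hus, rfl⟩ := hys
  have hnp : (xs - (ws + us)) (y - x) ≤ 0 := by
    have h0 := hmono y ws us hws hus
    simp only [ContinuousLinearMap.sub_apply, ContinuousLinearMap.add_apply] at h0 ⊢
    linarith
  exact (ENNReal.ofReal_eq_zero.mpr (div_nonpos_of_nonpos_of_nonneg hnp (norm_nonneg _))).le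
end

section
/- Let T : X →→ X* be a regular maximal monotone multifunction. Then T satisfies condition (SM2): whenever C ⊂ X* is nonempty, convex and weak*-compact, x₀ ∈ X, and for every (y, y*) ∈ G(T) there exists x* ∈ C with ⟨y* - x*, y - x₀⟩ ≥ 0, then there exists x₀* ∈ C with x₀* ∈ T(x₀). (Assume as hypothesis that the sum of T with any bounded maximal monotone multifunction, in particular with the subdifferential of any continuous sublinear-type convex function, is maximal monotone.) -/
open scoped ENNReal
open NormedSpace Pointwise

variable {X : Type*} [NormedAddCommGroup X] [NormedSpace ℝ X] [CompleteSpace X]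

section Stmt5Aux

open NormedSpace Topology

variable {X : Type*} [NormedAddCommGroup X] [NormedSpace ℝ X]

/-- evaluation as a linear map on WeakDual -/
private noncomputable def evalWD (u : X) : WeakDual ℝ X →ₗ[ℝ] ℝ where
  toFun φ := φ u
  map_add' _ _ := rfl
  map_smul' _ _ := rfl

private theorem exists_eval (F : WeakDual ℝ X →L[ℝ] ℝ) :
    ∃ u : X, ∀ φ : WeakDual ℝ X, F φ = φ u := by
  have hb := LinearMap.hasBasis_weakBilin (topDualPairing ℝ X)
  have h1 : F ⁻¹' Metric.ball 0 1 ∈ 𝓝 (0 : WeakDual ℝ X) := by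
    have hc : ContinuousAt F (0 : WeakDual ℝ X) := F.continuous.continuousAt
    have : Metric.ball (0:ℝ) 1 ∈ 𝓝 (F 0) := by
      rw [map_zero]; exact Metric.ball_mem_nhds _ one_pos
    exact hc.preimage_mem_nhds this
  obtain ⟨U, hU, hUsub⟩ := hb.mem_iff.mp h1
  rw [SeminormFamily.basisSets_iff] at hU
  obtain ⟨s, r, hr, rfl⟩ := hU
  have hker : ⨅ x : ↥s, LinearMap.ker (evalWD (X := X) x) ≤
      LinearMap.ker (F : WeakDual ℝ X →ₗ[ℝ] ℝ) := by
    intro φ hφ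
    simp only [Submodule.mem_iInf, LinearMap.mem_ker] at hφ ⊢
    have hz : ∀ x ∈ s, φ x = 0 := fun x hx => hφ ⟨x, hx⟩
    have hball : ∀ t : ℝ,
        (t • φ) ∈ (s.sup ((topDualPairing ℝ X).toSeminormFamily)).ball 0 r := by
      intro t
      refine (Seminorm.mem_ball_zero (p := s.sup ((topDualPairing ℝ X).toSeminormFamily))
        (y := (t • φ : X →L[ℝ] ℝ)) (r := r)).2 ?_
      apply Seminorm.finset_sup_apply_lt hr
      intro i hi
      show ‖t • (φ i)‖ < r
      rw [hz i hi, smul_zero, norm_zero]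
      exact hr
    have habs : ∀ t : ℝ, ‖F (t • φ)‖ < 1 := by
      intro t
      have : F (t • φ) ∈ Metric.ball (0:ℝ) 1 := hUsub (hball t)
      simpa [Real.norm_eq_abs] using this
    by_contra hne
    have hne' : F φ ≠ 0 := hne
    have h2 := habs (2 / F φ)
    rw [map_smul, smul_eq_mul, div_mul_cancel₀ 2 hne'] at h2
    norm_num at h2
  have hspan := mem_span_of_iInf_ker_le_ker hker
  rw [Submodule.mem_span_range_iff_exists_fun] at hspan
  obtain ⟨c, hc⟩ := hspan
  refine ⟨∑ i : ↥s, c i • (i : X), fun φ => ?_⟩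
  have := congrArg (fun G : WeakDual ℝ X →ₗ[ℝ] ℝ => G φ) hc
  simp only [LinearMap.coe_sum, Finset.sum_apply, LinearMap.smul_apply,
    ContinuousLinearMap.coe_coe] at this
  rw [← this, map_sum]
  congr 1
  ext i
  show c i • (φ (i : X)) = φ (c i • (i : X))
  rw [map_smul]

private theorem image_eval_eq (C : Set (StrongDual ℝ X)) (u : X) :
    (fun φ : WeakDual ℝ X => φ u) '' (StrongDual.toWeakDual '' C)
      = (fun c : StrongDual ℝ X => c u) '' C := by
  rw [Set.image_image]
  rfl

private theorem compact_eval (C : Set (StrongDual ℝ X))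
    (hcomp : IsCompact (StrongDual.toWeakDual '' C)) (u : X) :
    IsCompact ((fun c : StrongDual ℝ X => c u) '' C) := by
  rw [← image_eval_eq]
  exact hcomp.image (WeakDual.eval_continuous u)

private theorem suppC_attain {C : Set (StrongDual ℝ X)} (hC : C.Nonempty)
    (hcomp : IsCompact (StrongDual.toWeakDual '' C)) (u : X) :
    ∃ c ∈ C, sSup ((fun c : StrongDual ℝ X => c u) '' C) = c u := by
  have := (compact_eval C hcomp u).sSup_mem (hC.image _)
  obtain ⟨c, hc, hceq⟩ := this
  exact ⟨c, hc, hceq.symm⟩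

private theorem suppC_le {C : Set (StrongDual ℝ X)}
    (hcomp : IsCompact (StrongDual.toWeakDual '' C)) {c : StrongDual ℝ X} (hc : c ∈ C) (u : X) :
    c u ≤ sSup ((fun c : StrongDual ℝ X => c u) '' C) :=
  le_csSup (compact_eval C hcomp u).bddAbove ⟨c, hc, rfl⟩

private theorem mem_of_le_suppC {C : Set (StrongDual ℝ X)} (hC : C.Nonempty) (hconv : Convex ℝ C)
    (hcomp : IsCompact (StrongDual.toWeakDual '' C)) {ys : StrongDual ℝ X}
    (hys : ∀ u : X, ys u ≤ sSup ((fun c : StrongDual ℝ X => c u) '' C)) : ys ∈ C := by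
  by_contra hmem
  have hKconv : Convex ℝ (StrongDual.toWeakDual '' C) :=
    hconv.linear_image (StrongDual.toWeakDual (E := X)).toLinearMap
  have hKcl : IsClosed (StrongDual.toWeakDual '' C) := hcomp.isClosed
  have hnot : StrongDual.toWeakDual ys ∉ StrongDual.toWeakDual '' C := by
    intro hin
    obtain ⟨c, hcC, hceq⟩ := hin
    exact hmem (((StrongDual.toWeakDual (E := X)).injective hceq) ▸ hcC)
  haveI : LocallyConvexSpace ℝ (WeakDual ℝ X) :=
    WeakBilin.locallyConvexSpace (B := topDualPairing ℝ X)
  obtain ⟨F, u0, hFlt, hFgt⟩ := geometric_hahn_banach_closed_point hKconv hKcl hnot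
  obtain ⟨v, hv⟩ := exists_eval F
  have h1 : ∀ c ∈ C, c v < u0 := by
    intro c hc
    have := hFlt _ ⟨c, hc, rfl⟩
    rwa [hv] at this
  have h2 : u0 < ys v := by
    have := hFgt
    rwa [hv] at this
  have h3 : sSup ((fun c : StrongDual ℝ X => c v) '' C) ≤ u0 := by
    apply csSup_le (hC.image _)
    rintro x ⟨c, hc, rfl⟩
    exact (h1 c hc).le
  linarith [hys v]

end Stmt5Aux


theorem stmt5 (T : X → Set (StrongDual ℝ X)) (hT : IsMaxMonotoneOp T) (hreg : IsRegularOp T)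
    (hsum : ∀ S : X → Set (StrongDual ℝ X), IsMaxMonotoneOp S →
      (∃ M : ℝ, ∀ y us, us ∈ S y → ‖us‖ ≤ M) → IsMaxMonotoneOp (fun z => T z + S z))
    (C : Set (StrongDual ℝ X)) (x0 : X) (hC : C.Nonempty) (hconv : Convex ℝ C)
    (hcomp : IsCompact (StrongDual.toWeakDual '' C))
    (h : ∀ y ys, ys ∈ T y → ∃ xs ∈ C, 0 ≤ (ys - xs) (y - x0)) :
    ∃ x0s ∈ C, x0s ∈ T x0 := by
  classical
  -- uniform bound on C
  obtain ⟨M, hM⟩ : ∃ M : ℝ, ∀ c ∈ C, ‖c‖ ≤ M := by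
    have hpt : ∀ x : X, ∃ b : ℝ, ∀ i : ↥C, ‖(i : StrongDual ℝ X) x‖ ≤ b := by
      intro x
      have hcpt : IsCompact ((fun r : ℝ => ‖r‖) ''
          ((fun φ : WeakDual ℝ X => φ x) '' (StrongDual.toWeakDual '' C))) :=
        (hcomp.image (WeakDual.eval_continuous x)).image continuous_norm
      obtain ⟨b, hb⟩ := hcpt.bddAbove
      refine ⟨b, fun i => hb ⟨(i : StrongDual ℝ X) x, ⟨_, ⟨(i : StrongDual ℝ X), i.2, rfl⟩, rfl⟩, rfl⟩⟩
    obtain ⟨M, hM⟩ := banach_steinhaus (g := fun i : ↥C => (i : StrongDual ℝ X)) hpt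
    exact ⟨M, fun c hc => hM ⟨c, hc⟩⟩
  have hM0 : 0 ≤ M := le_trans (norm_nonneg _) (hM _ hC.choose_spec)
  -- the auxiliary convex function
  set f : X → ℝ := fun z => sSup ((fun c : StrongDual ℝ X => c (x0 - z)) '' C) with hfdef
  have hfle : ∀ (z : X) (c : StrongDual ℝ X), c ∈ C → c (x0 - z) ≤ f z :=
    fun z c hc => suppC_le hcomp hc (x0 - z)
  have hfmax : ∀ z : X, ∃ c ∈ C, f z = c (x0 - z) :=
    fun z => suppC_attain hC hcomp (x0 - z)
  have hfx0 : f x0 = 0 := by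
    obtain ⟨c, hc, hceq⟩ := hfmax x0
    rw [hceq, sub_self, map_zero]
  -- f is M-Lipschitz (one-sided estimate suffices)
  have hLip : ∀ z w : X, f w ≤ f z + M * ‖w - z‖ := by
    intro z w
    obtain ⟨c, hc, hceq⟩ := hfmax w
    have h1 : c (x0 - z) ≤ f z := hfle z c hc
    have h2 : c (z - w) ≤ M * ‖w - z‖ := by
      calc c (z - w) ≤ ‖c (z - w)‖ := le_abs_self _
        _ ≤ ‖c‖ * ‖z - w‖ := c.le_opNorm _
        _ ≤ M * ‖z - w‖ := by
            apply mul_le_mul_of_nonneg_right (hM c hc) (norm_nonneg _)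
        _ = M * ‖w - z‖ := by rw [norm_sub_rev]
    have h3 : c (x0 - w) = c (x0 - z) + c (z - w) := by
      rw [map_sub, map_sub, map_sub]; ring
    rw [hceq, h3]
    linarith
  -- subdiff f is maximal monotone and bounded
  have hSmono : IsMonotoneOp (subdiff f) := by
    intro x xs y ys hx hy
    have h1 := hx y
    have h2 := hy x
    rw [map_sub] at h1 h2
    simp only [ContinuousLinearMap.sub_apply, map_sub]
    linarith
  have hsubmax : ∀ w : X, ∃ c ∈ C, f w = c (x0 - w) ∧ (-c) ∈ subdiff f w := by
    intro w
    obtain ⟨c, hcC, hcw⟩ := hfmax w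
    refine ⟨c, hcC, hcw, fun v => ?_⟩
    have h1 : c (x0 - v) ≤ f v := hfle v c hcC
    rw [hcw]
    simp only [ContinuousLinearMap.neg_apply]
    rw [map_sub c x0 w, map_sub c v w]
    rw [map_sub c x0 v] at h1
    linarith
  have hSmax : IsMaxMonotoneOp (subdiff f) := by
    refine ⟨hSmono, fun x xs hx w => ?_⟩
    set hvec : X := w - x with hh
    have key2 : ∀ t ∈ Set.Ioo (0:ℝ) 1,
        xs hvec ≤ (f w - f x) + t * (M * ‖hvec‖ + xs hvec) := by
      intro t ht
      obtain ⟨ht0, ht1⟩ := ht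
      set z : X := x + t • hvec with hz
      obtain ⟨c, hcC, hcz, hcsub⟩ := hsubmax z
      have hmono := hx z (-c) hcsub
      have hA : xs hvec ≤ (-c) hvec := by
        by_contra hcon
        push_neg at hcon
        have e1 : x - z = -(t • hvec) := by rw [hz]; abel
        rw [e1, map_neg, map_smul] at hmono
        simp only [smul_eq_mul, ContinuousLinearMap.sub_apply] at hmono
        have hp := mul_pos ht0 (sub_pos.mpr hcon)
        linarith
      have hsg := hcsub w
      have e2 : w - z = (1 - t) • hvec := by
        rw [hz, hh]
        module
      rw [e2, map_smul] at hsg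
      simp only [smul_eq_mul] at hsg
      have hlb : f x ≤ f z + M * (t * ‖hvec‖) := by
        have hl := hLip z x
        have e3 : ‖x - z‖ = t * ‖hvec‖ := by
          rw [hz, show x - (x + t • hvec) = -(t • hvec) by abel, norm_neg, norm_smul,
            Real.norm_eq_abs, abs_of_pos ht0]
        rwa [e3] at hl
      have h1t : (0:ℝ) < 1 - t := by linarith
      have hfin : (1 - t) * xs hvec ≤ (1 - t) * ((-c) hvec) :=
        mul_le_mul_of_nonneg_left hA h1t.le
      nlinarith [hsg, hlb, hfin]
    have hlim : xs hvec ≤ f w - f x := by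
      refine ge_of_tendsto (f := fun t : ℝ => (f w - f x) + t * (M * ‖hvec‖ + xs hvec))
        (x := nhdsWithin (0:ℝ) (Set.Ioi 0)) ?_ ?_
      · have hcont : Continuous (fun t : ℝ => (f w - f x) + t * (M * ‖hvec‖ + xs hvec)) :=
          continuous_const.add (continuous_id.mul continuous_const)
        have htd := hcont.tendsto (0 : ℝ)
        rw [zero_mul, add_zero] at htd
        exact htd.mono_left nhdsWithin_le_nhds
      · filter_upwards [Ioo_mem_nhdsGT_of_mem (Set.mem_Ico.mpr ⟨le_refl (0:ℝ), zero_lt_one⟩)]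
          with t ht
        exact key2 t ht
    linarith
  have hSbdd : ∀ (z : X) (zs : StrongDual ℝ X), zs ∈ subdiff f z → ‖zs‖ ≤ M := by
    intro z zs hzs
    have key : ∀ u : X, zs u ≤ M * ‖u‖ := by
      intro u
      have h1 := hzs (z + u)
      have h2 : f (z + u) ≤ f z + M * ‖u‖ := by
        have := hLip z (z + u)
        rwa [add_sub_cancel_left] at this
      have h3 : zs (z + u - z) = zs u := by rw [add_sub_cancel_left]
      rw [h3] at h1
      linarith
    apply ContinuousLinearMap.opNorm_le_bound _ hM0
    intro u
    rw [Real.norm_eq_abs, abs_le]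
    constructor
    · have := key (-u)
      rw [map_neg, norm_neg] at this
      linarith
    · exact key u
  -- apply maximality of T + subdiff f at (x0, 0)
  have hTS := hsum (subdiff f) hSmax ⟨M, hSbdd⟩
  have key : ∀ y ws, ws ∈ T y + subdiff f y → 0 ≤ ((0 : StrongDual ℝ X) - ws) (x0 - y) := by
    intro y ws hws
    rw [Set.mem_add] at hws
    obtain ⟨ys, hys, zs, hzs, rfl⟩ := hws
    obtain ⟨xs, hxsC, hxs⟩ := h y ys hys
    have h1 : f y + zs (x0 - y) ≤ f x0 := hzs x0
    have h2 : xs (x0 - y) ≤ f y := hfle y xs hxsC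
    rw [hfx0] at h1
    simp only [ContinuousLinearMap.sub_apply, ContinuousLinearMap.add_apply,
      ContinuousLinearMap.zero_apply, map_sub] at hxs h1 h2 ⊢
    linarith
  have hmem : (0 : StrongDual ℝ X) ∈ T x0 + subdiff f x0 := hTS.2 x0 0 key
  rw [Set.mem_add] at hmem
  obtain ⟨ys, hysT, zs, hzs, hsum0⟩ := hmem
  have hyszs : ys = -zs := eq_neg_of_add_eq_zero_left hsum0
  refine ⟨ys, ?_, hysT⟩
  apply mem_of_le_suppC hC hconv hcomp
  intro u
  have h1 := hzs (x0 - u)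
  rw [hfx0] at h1
  have h2 : zs (x0 - u - x0) = -(zs u) := by
    rw [show x0 - u - x0 = -u by abel, map_neg]
  rw [h2] at h1
  have h3 : f (x0 - u) = sSup ((fun c : StrongDual ℝ X => c u) '' C) := by
    show sSup ((fun c : StrongDual ℝ X => c (x0 - (x0 - u))) '' C) = _
    rw [sub_sub_cancel]
  rw [h3] at h1
  rw [hyszs]
  simp only [ContinuousLinearMap.neg_apply]
  linarith
end

section
/- If T : X →→ X* is a maximal monotone multifunction satisfying condition (SM2), then T is regular. -/
open scoped ENNReal
open NormedSpace Pointwise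

variable {X : Type*} [NormedAddCommGroup X] [NormedSpace ℝ X] [CompleteSpace X]

theorem stmt7 (T : X → Set (StrongDual ℝ X)) (hT : IsMaxMonotoneOp T)
    (hSM2 : ∀ (C : Set (StrongDual ℝ X)) (x0 : X), C.Nonempty → Convex ℝ C →
      IsCompact (StrongDual.toWeakDual '' C) →
      (∀ y ys, ys ∈ T y → ∃ xs ∈ C, 0 ≤ (ys - xs) (y - x0)) →
      ∃ x0s ∈ C, x0s ∈ T x0) :
    IsRegularOp T := by
  intro x xs
  -- First: Lnum ≤ dnum
  have hLd : Lnum T x xs ≤ dnum T x xs := by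
    refine le_iInf₂ fun ys' hys' => ?_
    refine iSup₂_le fun y ys => iSup₂_le fun hys hyx => ?_
    refine ENNReal.ofReal_le_ofReal ?_
    have hxy : (0:ℝ) < ‖x - y‖ := by
      rw [norm_pos_iff, sub_ne_zero]; exact fun h => hyx h.symm
    rw [div_le_iff₀ hxy]
    have hmono : 0 ≤ (ys - ys') (y - x) := hT.1 hys hys'
    have h1 : (xs - ys) (y - x) = (xs - ys') (y - x) - (ys - ys') (y - x) := by
      simp only [ContinuousLinearMap.sub_apply]; ring
    have h2 : (xs - ys') (y - x) ≤ ‖ys' - xs‖ * ‖x - y‖ := by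
      calc (xs - ys') (y - x) ≤ ‖(xs - ys') (y - x)‖ := le_abs_self _
        _ ≤ ‖xs - ys'‖ * ‖y - x‖ := (xs - ys').le_opNorm _
        _ = ‖ys' - xs‖ * ‖x - y‖ := by rw [norm_sub_rev xs ys', norm_sub_rev y x]
    linarith
  refine le_antisymm hLd ?_
  by_cases htop : Lnum T x xs = ⊤
  · rw [htop]; exact le_top
  -- Lnum is finite; set M := its real value
  set M : ℝ := (Lnum T x xs).toReal with hM
  have hM0 : 0 ≤ M := ENNReal.toReal_nonneg
  have hLM : Lnum T x xs = ENNReal.ofReal M := by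
    rw [hM, ENNReal.ofReal_toReal htop]
  -- the bound from Lnum
  have hbound : ∀ y ys, ys ∈ T y → (xs - ys) (y - x) ≤ M * ‖y - x‖ := by
    intro y ys hys
    by_cases hyx : y = x
    · subst hyx; simp
    have hle : ENNReal.ofReal ((xs - ys) (y - x) / ‖x - y‖) ≤ Lnum T x xs := by
      refine le_trans ?_ (le_iSup₂ (f := fun y ys => ⨆ (_ : ys ∈ T y) (_ : y ≠ x),
        ENNReal.ofReal ((xs - ys) (y - x) / ‖x - y‖)) y ys)
      exact le_iSup₂ (f := fun (_ : ys ∈ T y) (_ : y ≠ x) =>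
        ENNReal.ofReal ((xs - ys) (y - x) / ‖x - y‖)) hys hyx
    rw [hLM] at hle
    have hxy : (0:ℝ) < ‖x - y‖ := by
      rw [norm_pos_iff, sub_ne_zero]; exact fun h => hyx h.symm
    have hd : (xs - ys) (y - x) / ‖x - y‖ ≤ M := by
      rcases le_or_gt ((xs - ys) (y - x) / ‖x - y‖) 0 with h | h
      · linarith
      · exact (ENNReal.ofReal_le_ofReal_iff hM0).mp hle
    have := (div_le_iff₀ hxy).mp hd
    rw [norm_sub_rev]; linarith
  -- apply SM2 with C = closedBall xs M
  set C : Set (StrongDual ℝ X) := Metric.closedBall xs M with hC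
  have hne : C.Nonempty := ⟨xs, Metric.mem_closedBall_self hM0⟩
  have hconv : Convex ℝ C := convex_closedBall xs M
  have hcompact : IsCompact (StrongDual.toWeakDual '' C) := by
    have heq : StrongDual.toWeakDual '' C =
        (WeakDual.toStrongDual (𝕜 := ℝ) (E := X)) ⁻¹' Metric.closedBall xs M := by
      ext f
      constructor
      · rintro ⟨g, hg, rfl⟩; exact hg
      · intro hf; exact ⟨WeakDual.toStrongDual f, hf, rfl⟩
    rw [heq]
    exact WeakDual.isCompact_closedBall (𝕜 := ℝ) xs M
  have hhyp : ∀ y ys, ys ∈ T y → ∃ c ∈ C, 0 ≤ (ys - c) (y - x) := by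
    intro y ys hys
    by_cases hyx : y = x
    · subst hyx
      exact ⟨xs, Metric.mem_closedBall_self hM0, by simp⟩
    · have hne0 : y - x ≠ 0 := sub_ne_zero.mpr hyx
      obtain ⟨f, hf1, hfx⟩ := exists_dual_vector ℝ (y - x) (norm_ne_zero_iff.mpr hne0)
      refine ⟨xs - M • f, ?_, ?_⟩
      · rw [hC, Metric.mem_closedBall, dist_eq_norm]
        simp only [sub_sub_cancel_left, norm_neg, norm_smul, Real.norm_eq_abs,
          abs_of_nonneg hM0, hf1, mul_one]
        exact le_rfl
      · have hb := hbound y ys hys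
        have hfx' : f (y - x) = ‖y - x‖ := by exact_mod_cast hfx
        have : (ys - (xs - M • f)) (y - x)
            = -((xs - ys) (y - x)) + M * f (y - x) := by
          simp [ContinuousLinearMap.sub_apply, ContinuousLinearMap.smul_apply]; ring
        rw [this, hfx']
        linarith
  obtain ⟨x0s, hx0C, hx0T⟩ := hSM2 C x hne hconv hcompact hhyp
  calc dnum T x xs ≤ ENNReal.ofReal ‖x0s - xs‖ := by
        refine iInf₂_le_of_le x0s hx0T ?_; exact le_rfl
    _ ≤ ENNReal.ofReal M := by
        refine ENNReal.ofReal_le_ofReal ?_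
        have := hx0C
        rwa [hC, Metric.mem_closedBall, dist_eq_norm] at this
    _ = Lnum T x xs := hLM.symm
end

section
/- Let T : X →→ X* be a regular maximal monotone multifunction, ε ≥ 0, and x* ∈ T^ε(x). Then x ∈ D_T and T^ε(x) = T(x) + εB*. -/
open scoped ENNReal
open NormedSpace Pointwise

variable {X : Type*} [NormedAddCommGroup X] [NormedSpace ℝ X] [CompleteSpace X]

private lemma dnum_le_of_mem_Te {T : X → Set (StrongDual ℝ X)} (hreg : IsRegularOp T)
    {ε : ℝ} {x : X} {zs : StrongDual ℝ X} (hzs : zs ∈ Te T ε x) :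
    dnum T x zs ≤ ENNReal.ofReal ε := by
  rw [← hreg]
  refine iSup_le fun y => iSup_le fun ys => iSup_le fun hys => iSup_le fun hy => ?_
  apply ENNReal.ofReal_le_ofReal
  have hpos : 0 < ‖x - y‖ := by
    rw [norm_pos_iff, sub_ne_zero]
    exact fun h => hy h.symm
  rw [div_le_iff₀ hpos]
  have h1 := hzs y ys hys
  have heq : (zs - ys) (y - x) = -((zs - ys) (x - y)) := by
    rw [← neg_sub x y, map_neg]
  rw [heq]
  linarith

private lemma Tx_weakClosed {T : X → Set (StrongDual ℝ X)} (hT : IsMaxMonotoneOp T) (x : X) :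
    IsClosed (WeakDual.toStrongDual ⁻¹' (T x) : Set (WeakDual ℝ X)) := by
  have hset : (WeakDual.toStrongDual ⁻¹' (T x) : Set (WeakDual ℝ X)) =
      ⋂ (y : X), ⋂ (ys : StrongDual ℝ X), ⋂ (_ : ys ∈ T y),
        {f : WeakDual ℝ X | ys (x - y) ≤ f (x - y)} := by
    ext f
    simp only [Set.mem_preimage, Set.mem_iInter, Set.mem_setOf_eq]
    constructor
    · intro hf y ys hys
      have := hT.1 hf hys
      simpa [ContinuousLinearMap.sub_apply, sub_nonneg] using this
    · intro hf
      refine hT.2 x _ fun y ys hys => ?_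
      have := hf y ys hys
      simpa [ContinuousLinearMap.sub_apply, sub_nonneg] using this
  rw [hset]
  exact isClosed_iInter fun y => isClosed_iInter fun ys => isClosed_iInter fun _ =>
    isClosed_le continuous_const (WeakDual.eval_continuous _)

private lemma exists_close_of_mem_Te {T : X → Set (StrongDual ℝ X)} (hT : IsMaxMonotoneOp T)
    (hreg : IsRegularOp T) {ε : ℝ} (hε : 0 ≤ ε) {x : X} {zs : StrongDual ℝ X}
    (hzs : zs ∈ Te T ε x) : ∃ ts ∈ T x, ‖ts - zs‖ ≤ ε := by
  have happrox : ∀ δ : ℝ, 0 < δ → ∃ ts ∈ T x, ‖ts - zs‖ ≤ ε + δ := by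
    intro δ hδ
    have h1 : dnum T x zs < ENNReal.ofReal (ε + δ) := by
      refine lt_of_le_of_lt (dnum_le_of_mem_Te hreg hzs) ?_
      rw [ENNReal.ofReal_lt_ofReal_iff (by linarith)]
      linarith
    rw [dnum, iInf_lt_iff] at h1
    obtain ⟨ys, h2⟩ := h1
    rw [iInf_lt_iff] at h2
    obtain ⟨hys, h3⟩ := h2
    refine ⟨ys, hys, ?_⟩
    rw [ENNReal.ofReal_lt_ofReal_iff_of_nonneg (norm_nonneg _)] at h3
    linarith
  set K : ℕ → Set (WeakDual ℝ X) := fun n =>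
    (WeakDual.toStrongDual ⁻¹' (T x)) ∩
      (WeakDual.toStrongDual ⁻¹' Metric.closedBall zs (ε + 1 / (n + 1))) with hK
  have hKclosed : ∀ n, IsClosed (K n) := fun n =>
    (Tx_weakClosed hT x).inter (WeakDual.isClosed_closedBall zs _)
  have hKcompact : ∀ n, IsCompact (K n) := fun n =>
    (WeakDual.isCompact_closedBall (𝕜 := ℝ) zs _).inter_left (Tx_weakClosed hT x)
  have hKnonempty : ∀ n, (K n).Nonempty := by
    intro n
    have hpos : (0 : ℝ) < 1 / (n + 1) := by positivity
    obtain ⟨ts, hts, hdist⟩ := happrox _ hpos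
    refine ⟨StrongDual.toWeakDual ts, ?_, ?_⟩
    · simpa using hts
    · simp only [Set.mem_preimage, Metric.mem_closedBall]
      simpa [dist_eq_norm] using hdist
  have hKmono : ∀ n, K (n + 1) ⊆ K n := by
    intro n
    apply Set.inter_subset_inter_right
    apply Set.preimage_mono
    apply Metric.closedBall_subset_closedBall
    have : (1 : ℝ) / ((n : ℝ) + 1 + 1) ≤ 1 / ((n : ℝ) + 1) := by
      apply one_div_le_one_div_of_le
      · positivity
      · linarith
    push_cast
    linarith
  obtain ⟨f, hf⟩ := IsCompact.nonempty_iInter_of_sequence_nonempty_isCompact_isClosed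
    K hKmono hKnonempty (hKcompact 0) hKclosed
  simp only [Set.mem_iInter] at hf
  refine ⟨WeakDual.toStrongDual f, (hf 0).1, ?_⟩
  refine le_of_forall_pos_le_add fun δ hδ => ?_
  obtain ⟨n, hn⟩ := exists_nat_one_div_lt hδ
  have h2 := (hf n).2
  simp only [Set.mem_preimage, Metric.mem_closedBall, dist_eq_norm] at h2
  push_cast at hn h2 ⊢
  linarith

theorem stmt10 (T : X → Set (StrongDual ℝ X)) (hT : IsMaxMonotoneOp T) (hreg : IsRegularOp T)
    (ε : ℝ) (hε : 0 ≤ ε) (x : X) (xs : StrongDual ℝ X) (hxs : xs ∈ Te T ε x) :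
    (T x).Nonempty ∧ Te T ε x = T x + Metric.closedBall 0 ε := by
  obtain ⟨ts, hts, -⟩ := exists_close_of_mem_Te hT hreg hε hxs
  refine ⟨⟨ts, hts⟩, ?_⟩
  ext zs
  constructor
  · intro hzs
    obtain ⟨us, hus, hdist⟩ := exists_close_of_mem_Te hT hreg hε hzs
    rw [Set.mem_add]
    refine ⟨us, hus, zs - us, ?_, by abel⟩
    rw [Metric.mem_closedBall, dist_zero_right, norm_sub_rev]
    exact hdist
  · intro hzs
    rw [Set.mem_add] at hzs
    obtain ⟨us, hus, b, hb, rfl⟩ := hzs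
    rw [Metric.mem_closedBall, dist_zero_right] at hb
    intro y ys hys
    have h1 := hT.1 hus hys
    have h2 : ‖b (x - y)‖ ≤ ‖b‖ * ‖x - y‖ := b.le_opNorm _
    have h3 : ‖b‖ * ‖x - y‖ ≤ ε * ‖x - y‖ :=
      mul_le_mul_of_nonneg_right hb (norm_nonneg _)
    have h4 : -(ε * ‖x - y‖) ≤ b (x - y) := by
      have h5 := neg_abs_le (b (x - y))
      have h6 : |b (x - y)| ≤ ε * ‖x - y‖ := by
        rw [← Real.norm_eq_abs]; linarith
      linarith
    have heq : (us + b - ys) (x - y) = (us - ys) (x - y) + b (x - y) := by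
      simp [ContinuousLinearMap.sub_apply, ContinuousLinearMap.add_apply]; ring
    rw [heq]
    linarith
end

section
/- Let T : X →→ X* be a regular maximal monotone multifunction. Define L(x, x*, T^ε) = max(0, sup{⟨x* - y*, y - x⟩/‖x - y‖ - ε - δ : δ ≥ 0, y ≠ x, y* ∈ T^δ(y)}). Then L(x, x*, T^ε) = d(x*, T^ε(x)) for all (x, x*) and ε ≥ 0. -/
open scoped ENNReal
open NormedSpace Pointwise

variable {X : Type*} [NormedAddCommGroup X] [NormedSpace ℝ X] [CompleteSpace X]

/-- L(x, x*, T^ε), the generalized L for the enlargement. -/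
noncomputable def LnumE (T : X → Set (StrongDual ℝ X)) (ε : ℝ) (x : X) (xs : StrongDual ℝ X) : ℝ≥0∞ :=
  ⨆ (δ : ℝ) (_ : 0 ≤ δ) (y : X) (ys : StrongDual ℝ X) (_ : ys ∈ Te T δ y) (_ : y ≠ x),
    ENNReal.ofReal ((xs - ys) (y - x) / ‖x - y‖ - ε - δ)

/-- d(x*, T^ε(x)). -/
noncomputable def dnumE (T : X → Set (StrongDual ℝ X)) (ε : ℝ) (x : X) (xs : StrongDual ℝ X) : ℝ≥0∞ :=
  ⨅ (ys : StrongDual ℝ X) (_ : ys ∈ Te T ε x), ENNReal.ofReal ‖ys - xs‖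

lemma my_mem_Te_of_mem {T : X → Set (StrongDual ℝ X)} (hmono : IsMonotoneOp T) {ε : ℝ} (hε : 0 ≤ ε)
    {x : X} {xs : StrongDual ℝ X} (h : xs ∈ T x) : xs ∈ Te T ε x := by
  intro y ys hy
  have h1 : 0 ≤ (xs - ys) (x - y) := hmono h hy
  have h2 : 0 ≤ ε * ‖x - y‖ := mul_nonneg hε (norm_nonneg _)
  linarith

lemma my_approx {T : X → Set (StrongDual ℝ X)} (hreg : IsRegularOp T) {δ : ℝ} (hδ : 0 ≤ δ)
    {y : X} {ys : StrongDual ℝ X} (hy : ys ∈ Te T δ y) {η : ℝ} (hη : 0 < η) :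
    ∃ ts ∈ T y, ‖ts - ys‖ < δ + η := by
  have hL : Lnum T y ys ≤ ENNReal.ofReal δ := by
    refine iSup_le fun z => iSup_le fun zs => iSup_le fun hz => iSup_le fun hzy => ?_
    refine ENNReal.ofReal_le_ofReal ?_
    have hd : (0:ℝ) < ‖y - z‖ := by
      rw [norm_pos_iff, sub_ne_zero]
      exact (Ne.symm hzy)
    rw [div_le_iff₀ hd]
    have h1 := hy z zs hz
    have h2 : (ys - zs) (z - y) = -((ys - zs) (y - z)) := by
      rw [show z - y = -(y - z) by abel, map_neg]
    linarith
  have hd : dnum T y ys < ENNReal.ofReal (δ + η) := by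
    rw [← hreg y ys]
    exact lt_of_le_of_lt hL (by rw [ENNReal.ofReal_lt_ofReal_iff (by linarith)]; linarith)
  simp only [dnum, iInf_lt_iff] at hd
  obtain ⟨ts, hts, h⟩ := hd
  exact ⟨ts, hts, (ENNReal.ofReal_lt_ofReal_iff (by linarith)).mp h⟩

lemma my_pair_bound (f : StrongDual ℝ X) (v : X) : f v ≤ ‖f‖ * ‖v‖ :=
  le_trans (le_abs_self _) (by simpa [Real.norm_eq_abs] using f.le_opNorm v)

theorem stmt13 (T : X → Set (StrongDual ℝ X)) (hT : IsMaxMonotoneOp T) (hreg : IsRegularOp T)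
    (ε : ℝ) (hε : 0 ≤ ε) (x : X) (xs : StrongDual ℝ X) :
    LnumE T ε x xs = dnumE T ε x xs := by
  refine le_antisymm ?_ ?_
  · -- LnumE ≤ dnumE
    refine le_iInf fun ws => le_iInf fun hws => ?_
    refine iSup_le fun δ => iSup_le fun hδ => iSup_le fun y => iSup_le fun ys =>
      iSup_le fun hys => iSup_le fun hyx => ?_
    refine ENNReal.ofReal_le_ofReal ?_
    have hn : (0:ℝ) < ‖x - y‖ := by
      rw [norm_pos_iff, sub_ne_zero]; exact (Ne.symm hyx)
    have hn' : ‖y - x‖ = ‖x - y‖ := norm_sub_rev _ _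
    refine le_of_forall_pos_le_add fun η hη => ?_
    obtain ⟨ts, hts, htsn⟩ := my_approx hreg hδ hys hη
    have key : (xs - ys) (y - x) ≤ (‖ws - xs‖ + η + ε + δ) * ‖x - y‖ := by
      have e1 : (xs - ys) (y - x) =
          (xs - ws) (y - x) + (ws - ts) (y - x) + (ts - ys) (y - x) := by
        have : xs - ys = (xs - ws) + (ws - ts) + (ts - ys) := by abel
        rw [this]; simp
      have b1 : (xs - ws) (y - x) ≤ ‖ws - xs‖ * ‖x - y‖ := by
        have := my_pair_bound (xs - ws) (y - x)
        rwa [norm_sub_rev xs ws, hn'] at this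
      have b2 : (ws - ts) (y - x) ≤ ε * ‖x - y‖ := by
        have h1 := hws y ts hts
        have h2 : (ws - ts) (y - x) = -((ws - ts) (x - y)) := by
          rw [show y - x = -(x - y) by abel, map_neg]
        linarith
      have b3 : (ts - ys) (y - x) ≤ (δ + η) * ‖x - y‖ := by
        have h1 := my_pair_bound (ts - ys) (y - x)
        have h2 : ‖ts - ys‖ * ‖y - x‖ ≤ (δ + η) * ‖y - x‖ :=
          mul_le_mul_of_nonneg_right htsn.le (norm_nonneg _)
        rw [hn'] at h2
        rw [hn'] at h1
        linarith
      rw [e1]; linarith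
    have : (xs - ys) (y - x) / ‖x - y‖ ≤ ‖ws - xs‖ + η + ε + δ := by
      rw [div_le_iff₀ hn]; exact key
    linarith
  · -- dnumE ≤ LnumE
    refine ENNReal.le_of_forall_pos_le_add fun η hη hM => ?_
    have hL : Lnum T x xs ≤ LnumE T ε x xs + ENNReal.ofReal ε := by
      refine iSup_le fun y => iSup_le fun ys => iSup_le fun hys => iSup_le fun hyx => ?_
      set q := (xs - ys) (y - x) / ‖x - y‖ with hq
      have step1 : ENNReal.ofReal q ≤ ENNReal.ofReal (q - ε - 0) + ENNReal.ofReal ε := by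
        calc ENNReal.ofReal q ≤ ENNReal.ofReal ((q - ε - 0) + ε) :=
              ENNReal.ofReal_le_ofReal (by linarith)
          _ ≤ _ := ENNReal.ofReal_add_le
      refine le_trans step1 (add_le_add ?_ le_rfl)
      have hTe : ys ∈ Te T 0 y := my_mem_Te_of_mem hT.1 le_rfl hys
      exact le_iSup_of_le 0 (le_iSup_of_le le_rfl (le_iSup_of_le y (le_iSup_of_le ys
        (le_iSup_of_le hTe (le_iSup_of_le hyx le_rfl)))))
    have hd : dnum T x xs < LnumE T ε x xs + ENNReal.ofReal ε + η := by
      rw [← hreg x xs]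
      refine lt_of_le_of_lt hL ?_
      refine ENNReal.lt_add_right ?_ (by exact_mod_cast hη.ne')
      exact (ENNReal.add_lt_top.mpr ⟨hM, ENNReal.ofReal_lt_top⟩).ne
    simp only [dnum, iInf_lt_iff] at hd
    obtain ⟨ts, hts, hlt⟩ := hd
    set r := ‖ts - xs‖ with hr
    rcases eq_or_lt_of_le (norm_nonneg (ts - xs)) with h0 | h0
    · -- r = 0, so ts = xs ∈ T x ⊆ Te T ε x
      have : ts = xs := by rwa [eq_comm, norm_eq_zero, sub_eq_zero] at h0
      subst this
      have hmem : ts ∈ Te T ε x := my_mem_Te_of_mem hT.1 hε hts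
      calc dnumE T ε x ts ≤ ENNReal.ofReal ‖ts - ts‖ := iInf₂_le ts hmem
        _ = 0 := by simp
        _ ≤ _ := zero_le
    · set c := min ε r with hc
      have hcr : c ≤ r := min_le_right _ _
      have hcε : c ≤ ε := min_le_left _ _
      have hc0 : 0 ≤ c := le_min hε h0.le
      set u : StrongDual ℝ X := (c / r) • (xs - ts) with hu
      have hxt : ‖xs - ts‖ = r := by rw [hr, norm_sub_rev]
      have hun : ‖u‖ = c := by
        rw [hu, norm_smul, Real.norm_eq_abs, abs_of_nonneg (div_nonneg hc0 h0.le), hxt]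
        exact div_mul_cancel₀ c h0.ne'
      have hwsmem : ts + u ∈ Te T ε x := by
        intro z zs hz
        have h1 : 0 ≤ (ts - zs) (x - z) := hT.1 hts hz
        have h2 : -(‖u‖ * ‖x - z‖) ≤ u (x - z) := by
          have := my_pair_bound (-u) (x - z)
          simp only [ContinuousLinearMap.neg_apply, norm_neg] at this
          linarith
        have h3 : ‖u‖ * ‖x - z‖ ≤ ε * ‖x - z‖ := by
          rw [hun]; exact mul_le_mul_of_nonneg_right hcε (norm_nonneg _)
        have h4 : (ts + u - zs) (x - z) = (ts - zs) (x - z) + u (x - z) := by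
          have : ts + u - zs = (ts - zs) + u := by abel
          rw [this]; simp
        rw [h4]; linarith
      have hwn : ‖ts + u - xs‖ = r - c := by
        have e : ts + u - xs = (1 - c / r) • (ts - xs) := by
          rw [hu, smul_sub]
          module
        rw [e, norm_smul, Real.norm_eq_abs, ← hr,
          abs_of_nonneg (by rw [sub_nonneg]; exact div_le_one_of_le₀ hcr h0.le)]
        field_simp
        rw [mul_sub, mul_one, mul_div_cancel₀ c (ne_of_gt h0)]
      calc dnumE T ε x xs ≤ ENNReal.ofReal ‖ts + u - xs‖ := iInf₂_le _ hwsmem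
        _ = ENNReal.ofReal (r - ε) := by
            rw [hwn]
            rcases le_total ε r with h | h
            · rw [hc, min_eq_left h]
            · rw [hc, min_eq_right h, sub_self, ENNReal.ofReal_eq_zero.mpr (by linarith)]
              simp [ENNReal.ofReal_eq_zero.mpr (by linarith : r - ε ≤ 0)]
        _ = ENNReal.ofReal r - ENNReal.ofReal ε := ENNReal.ofReal_sub _ hε
        _ ≤ LnumE T ε x xs + η := by
            rw [tsub_le_iff_right]
            calc ENNReal.ofReal r ≤ LnumE T ε x xs + ENNReal.ofReal ε + η := hlt.le
              _ = LnumE T ε x xs + η + ENNReal.ofReal ε := by ring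
end

section
/- Let T : X →→ X* be a regular maximal monotone multifunction and ε > 0. If T_ε(x) ≠ ∅ then x belongs to the closure of D_T; i.e. D_{T_ε} ⊆ cl(D_T). -/
open scoped ENNReal
open NormedSpace Pointwise

variable {X : Type*} [NormedAddCommGroup X] [NormedSpace ℝ X] [CompleteSpace X]

theorem stmt17 (T : X → Set (StrongDual ℝ X)) (hT : IsMaxMonotoneOp T) (hreg : IsRegularOp T)
    (ε : ℝ) (hε : 0 < ε) (x : X) (hx : (Tlow T ε x).Nonempty) :
    x ∈ closure {y : X | (T y).Nonempty} := by
  by_contra hcl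
  obtain ⟨xs, hxs⟩ := hx
  -- get r > 0 with ball x r disjoint from D_T
  have hopen : IsOpen (closure {y : X | (T y).Nonempty})ᶜ := isClosed_closure.isOpen_compl
  obtain ⟨r, hr, hball⟩ := Metric.isOpen_iff.mp hopen x hcl
  have hfar : ∀ y, (T y).Nonempty → r ≤ ‖x - y‖ := by
    intro y hy
    by_contra h
    push_neg at h
    have : y ∈ Metric.ball x r := by
      rw [Metric.mem_ball, dist_comm, dist_eq_norm]; exact h
    exact (hball this) (subset_closure hy)
  -- T x = ∅
  have hTx : T x = ∅ := by
    rw [Set.eq_empty_iff_forall_notMem]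
    intro ys hys
    exact hcl (subset_closure ⟨ys, hys⟩)
  -- dnum = ⊤
  have hd : dnum T x xs = ⊤ := by
    simp [dnum, hTx]
  -- Lnum ≤ ofReal (ε / r)
  have hL : Lnum T x xs ≤ ENNReal.ofReal (ε / r) := by
    refine iSup_le fun y => iSup_le fun ys => iSup_le fun hys => iSup_le fun hyx => ?_
    apply ENNReal.ofReal_le_ofReal
    have hnorm : r ≤ ‖x - y‖ := hfar y ⟨ys, hys⟩
    have hpos : (0:ℝ) < ‖x - y‖ := lt_of_lt_of_le hr hnorm
    have hnum : (xs - ys) (y - x) ≤ ε := by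
      have := hxs y ys hys
      have h2 : (xs - ys) (y - x) = -((xs - ys) (x - y)) := by
        rw [← map_neg]; congr 1; abel
      linarith
    calc (xs - ys) (y - x) / ‖x - y‖ ≤ ε / ‖x - y‖ :=
          div_le_div_of_nonneg_right hnum hpos.le |>.trans_eq rfl
      _ ≤ ε / r := div_le_div_of_nonneg_left hε.le hr hnorm
  rw [hreg x xs, hd] at hL
  exact absurd hL (by simp [ENNReal.ofReal_lt_top.ne])
end
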